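/- Let p ≡ 1 (mod 8) be prime and fix √2, i ∈ 𝔽_p with (√2)² = 2, i² = -1. For the elliptic curve E: y² = x³ - x over 𝔽_p and η = 1 + [i], the set of x-coordinates of points P (over the algebraic closure) with η⁴(P) = ∞ and η³(P) ≠ ∞ is {1+√2, 1-√2, -1+√2, -1-√2}. -/

import Mathlib

/-- The elliptic curve `y² = x³ - x` over the algebraic closure of `ℤ/pℤ`. -/
noncomputable def EcurveBar (p : ℕ) [Fact p.Prime] : WeierstrassCurve.Affine (AlgebraicClosure (ZMod p)) :=
  { a₁ := 0, a₂ := 0, a₃ := 0, a₄ := -1, a₆ := 0 }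

open WeierstrassCurve.Affine WeierstrassCurve.Affine.Point

section Helpers

variable (p : ℕ) [Fact p.Prime]

open Classical

local notation "K" => AlgebraicClosure (ZMod p)

lemma Ens (h2 : (2:K) ≠ 0) (x y : K) :
    (EcurveBar p).Nonsingular x y ↔ y ^ 2 = x ^ 3 - x := by
  constructor
  · intro h
    have := h.1
    rw [equation_iff] at this
    simp only [EcurveBar] at this
    linear_combination this
  · intro h
    refine (equation_iff_nonsingular_of_Δ_ne_zero ?_).mp ?_
    swap
    · rw [equation_iff]; simp only [EcurveBar]; linear_combination h
    · simp only [WeierstrassCurve.Δ, WeierstrassCurve.b₂, WeierstrassCurve.b₄,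
        WeierstrassCurve.b₆, WeierstrassCurve.b₈, EcurveBar]
      intro hc
      apply h2
      have h64 : (2 : K)^6 = 0 := by linear_combination hc
      exact pow_eq_zero_iff (by norm_num) |>.mp h64

lemma EnegY (x y : K) : (EcurveBar p).negY x y = -y := by
  simp [negY, EcurveBar]

lemma some_eq_some_iff {x₁ y₁ x₂ y₂ : K} (h₁ : (EcurveBar p).Nonsingular x₁ y₁)
    (h₂ : (EcurveBar p).Nonsingular x₂ y₂) :
    (Point.some _ _ h₁ : (EcurveBar p).Point) = Point.some _ _ h₂ ↔ x₁ = x₂ ∧ y₁ = y₂ := by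
  constructor
  · intro h
    injection h with hx hy
    exact ⟨hx, hy⟩
  · rintro ⟨rfl, rfl⟩
    rfl

end Helpers
section Psi

variable {p : ℕ} [Fact p.Prime]

open Classical

local notation "K" => AlgebraicClosure (ZMod p)

lemma hIne {I : K} (hI : I ^ 2 = -1) : I ≠ 0 := by
  intro h
  rw [h] at hI
  exact one_ne_zero (α := K) (by linear_combination hI)

lemma phi_ns (h2 : (2:K) ≠ 0) {I : K} (hI : I ^ 2 = -1) {x y : K}
    (h : (EcurveBar p).Nonsingular x y) :
    (EcurveBar p).Nonsingular (-x) (I * y) := by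
  rw [Ens p h2] at h ⊢
  linear_combination (y^2) * hI - h

noncomputable def psi (h2 : (2:K) ≠ 0) (I : K) (hI : I ^ 2 = -1) :
    (EcurveBar p).Point → (EcurveBar p).Point
  | .zero => .zero
  | .some _ _ h => .some _ _ (phi_ns h2 hI h)

@[simp] lemma psi_zero (h2 : (2:K) ≠ 0) (I : K) (hI : I ^ 2 = -1) :
    psi h2 I hI 0 = 0 := rfl

@[simp] lemma psi_some (h2 : (2:K) ≠ 0) (I : K) (hI : I ^ 2 = -1) {x y : K}
    (h : (EcurveBar p).Nonsingular x y) :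
    psi h2 I hI (Point.some _ _ h) = Point.some _ _ (phi_ns h2 hI h) := rfl

lemma slope_psi (h2 : (2:K) ≠ 0) {I : K} (hI : I ^ 2 = -1)
    {x₁ y₁ x₂ y₂ : K} (h₁ : (EcurveBar p).Nonsingular x₁ y₁)
    (h₂' : (EcurveBar p).Nonsingular x₂ y₂)
    (hxy : x₁ = x₂ → y₁ ≠ (EcurveBar p).negY x₂ y₂) :
    (EcurveBar p).slope (-x₁) (-x₂) (I * y₁) (I * y₂) =
      -I * (EcurveBar p).slope x₁ x₂ y₁ y₂ := by
  by_cases hx : x₁ = x₂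
  · subst hx
    have hy : y₁ ≠ (EcurveBar p).negY x₁ y₂ := hxy rfl
    have hy' : y₁ = y₂ := Y_eq_of_Y_ne h₁.1 h₂'.1 rfl hy
    subst hy'
    have hyn : y₁ ≠ -y₁ := by rwa [EnegY] at hy
    have hy0 : y₁ ≠ 0 := fun h => hyn (by rw [h]; ring)
    have hIy : I * y₁ ≠ (EcurveBar p).negY (-x₁) (I * y₁) := by
      rw [EnegY]
      intro hc
      exact hy0 (by
        have h2' : 2 * (I * y₁) = 0 := by linear_combination hc
        have hIy0 : I * y₁ = 0 := by
          rcases mul_eq_zero.mp h2' with h | h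
          · exact absurd h h2
          · exact h
        rcases mul_eq_zero.mp hIy0 with h | h
        · exact absurd h (hIne hI)
        · exact h)
    rw [slope_of_Y_ne rfl hIy, slope_of_Y_ne rfl hy]
    rw [EnegY, EnegY]
    simp only [EcurveBar]
    rw [div_eq_iff (by intro hc; exact hy0 (by
          have h2' : 2 * (I * y₁) = 0 := by linear_combination hc
          rcases mul_eq_zero.mp h2' with h | h
          · exact absurd h h2
          · rcases mul_eq_zero.mp h with h | h
            · exact absurd h (hIne hI)
            · exact h)),
       mul_comm (-I), div_mul_eq_mul_div, div_mul_eq_mul_div,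
       eq_div_iff (by intro hc; exact hy0 (by
          have h2' : 2 * y₁ = 0 := by linear_combination hc
          rcases mul_eq_zero.mp h2' with h | h
          · exact absurd h h2
          · exact h))]
    linear_combination (2 * y₁ * (3 * x₁^2 - 1)) * hI
  · have hx' : -x₁ ≠ -x₂ := fun h => hx (neg_inj.mp h)
    rw [slope_of_X_ne hx, slope_of_X_ne hx']
    have hsub : x₁ - x₂ ≠ 0 := sub_ne_zero_of_ne hx
    have hsub2 : -x₁ - -x₂ ≠ 0 := fun hc => hx (by linear_combination -hc)
    have hsub3 : -x₁ + x₂ ≠ 0 := fun hc => hx (by linear_combination -hc)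
    field_simp [hsub, hsub2, hsub3]
    ring


lemma psi_add (h2 : (2:K) ≠ 0) (I : K) (hI : I ^ 2 = -1)
    (P Q : (EcurveBar p).Point) :
    psi h2 I hI (P + Q) = psi h2 I hI P + psi h2 I hI Q := by
  rcases P with _ | @⟨x₁, y₁, h₁⟩
  · rw [← zero_def, psi_zero, zero_add, zero_add]
  rcases Q with _ | @⟨x₂, y₂, h₂⟩
  · rw [← zero_def, psi_zero, add_zero, add_zero]
  by_cases hxy : x₁ = x₂ ∧ y₁ = (EcurveBar p).negY x₂ y₂
  · obtain ⟨rfl, hy⟩ := hxy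
    rw [add_of_Y_eq rfl hy, psi_zero, psi_some, psi_some, add_of_Y_eq rfl (by
      rw [EnegY] at hy ⊢; rw [hy]; ring)]
  · rw [not_and_or] at hxy
    have hxy' : x₁ = x₂ → y₁ ≠ (EcurveBar p).negY x₂ y₂ := by
      intro hx
      rcases hxy with h | h
      · exact absurd hx h
      · exact h
    have hxy'' : -x₁ = -x₂ → I * y₁ ≠ (EcurveBar p).negY (-x₂) (I * y₂) := by
      intro hx hc
      rw [EnegY] at hc
      have hx0 : x₁ = x₂ := neg_inj.mp hx
      apply hxy' hx0
      rw [EnegY]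
      have : I * (y₁ + y₂) = 0 := by linear_combination hc
      rcases mul_eq_zero.mp this with h | h
      · exact absurd h (hIne hI)
      · linear_combination h
    rw [add_some (fun hc => hxy' hc.1 hc.2), psi_some, psi_some, psi_some, add_some (fun hc => hxy'' hc.1 hc.2),
      some_eq_some_iff]
    rw [slope_psi h2 hI h₁ h₂ hxy']
    set L := (EcurveBar p).slope x₁ x₂ y₁ y₂ with hL
    constructor
    · simp only [addX, EcurveBar]
      linear_combination (-(L^2)) * hI
    · simp only [addY, negAddY, addX, negY, EcurveBar]
      linear_combination (-I * L^3) * hI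

lemma psi_psi (h2 : (2:K) ≠ 0) (I : K) (hI : I ^ 2 = -1)
    (P : (EcurveBar p).Point) :
    psi h2 I hI (psi h2 I hI P) = -P := by
  rcases P with _ | @⟨x₁, y₁, h₁⟩
  · rfl
  · rw [psi_some, psi_some, neg_some, some_eq_some_iff]
    constructor
    · ring
    · rw [EnegY]; linear_combination y₁ * hI


lemma lemA (h2 : (2:K) ≠ 0) (x : K) (hx3 : x ^ 3 = x) (hq : x ^ 2 - 2 * x - 1 = 0) :
    False := by
  have h5 : 4 * x + 2 = 0 := by linear_combination hx3 - (x + 2) * hq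
  have h4 : (2:K) * 2 = 0 := by linear_combination (-4 * x + 10) * h5 + 16 * hq
  exact h2 (mul_self_eq_zero.mp h4)

lemma hP1 (h2 : (2:K) ≠ 0) : (EcurveBar p).Nonsingular 1 0 :=
  (Ens p h2 1 0).mpr (by ring)

lemma hPm1 (h2 : (2:K) ≠ 0) : (EcurveBar p).Nonsingular (-1) 0 :=
  (Ens p h2 (-1) 0).mpr (by ring)

lemma tor (h2 : (2:K) ≠ 0) (I : K) (hI : I ^ 2 = -1) (Q : (EcurveBar p).Point) :
    (Q + Q = 0 ∧ psi h2 I hI Q ≠ Q) ↔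
      (Q = Point.some _ _ (hP1 h2) ∨ Q = Point.some _ _ (hPm1 h2)) := by
  rcases Q with _ | @⟨x, y, hq⟩
  · constructor
    · rintro ⟨-, hne⟩
      exact absurd rfl hne
    · rintro (hc | hc) <;> exact absurd hc.symm (some_ne_zero _)
  · constructor
    · rintro ⟨hQQ, hne⟩
      by_cases hy : y = (EcurveBar p).negY x y
      swap
      · rw [add_self_of_Y_ne hy] at hQQ
        exact absurd hQQ (some_ne_zero _)
      rw [EnegY] at hy
      have hy0 : y = 0 := by
        have h2y : 2 * y = 0 := by linear_combination hy
        rcases mul_eq_zero.mp h2y with hc | hc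
        · exact absurd hc h2
        · exact hc
      have hx0 : x ≠ 0 := by
        intro hc
        apply hne
        rw [psi_some, some_eq_some_iff]
        constructor
        · rw [hc]; ring
        · rw [hy0]; ring
      have hx3 : x ^ 3 = x := by
        have := (Ens p h2 x y).mp hq
        rw [hy0] at this
        linear_combination -this
      have : x * ((x - 1) * (x + 1)) = 0 := by linear_combination hx3
      rcases mul_eq_zero.mp this with hc | hc
      · exact absurd hc hx0
      rcases mul_eq_zero.mp hc with hc | hc
      · left
        rw [some_eq_some_iff]
        exact ⟨by linear_combination hc, hy0⟩
      · right
        rw [some_eq_some_iff]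
        exact ⟨by linear_combination hc, hy0⟩
    · rintro (hc | hc) <;> rw [some_eq_some_iff] at hc <;>
        obtain ⟨hx, hy⟩ := hc <;> subst hx <;> subst hy <;>
        refine ⟨add_self_of_Y_eq (by rw [EnegY]; ring), ?_⟩ <;>
        · intro hc
          rw [psi_some, some_eq_some_iff] at hc
          exact h2 (by first | linear_combination -hc.1 | linear_combination hc.1)


lemma dbl (h2 : (2:K) ≠ 0) (S : K) (hS : S ^ 2 = 2) {x y : K}
    (h : (EcurveBar p).Nonsingular x y) :
    (Point.some _ _ h + Point.some _ _ h = Point.some _ _ (hP1 h2) ∨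
      Point.some _ _ h + Point.some _ _ h = Point.some _ _ (hPm1 h2)) ↔
      (x = 1 + S ∨ x = 1 - S ∨ x = -1 + S ∨ x = -1 - S) := by
  have hy2 : y ^ 2 = x ^ 3 - x := (Ens p h2 x y).mp h
  by_cases hy0 : y = 0
  · subst hy0
    rw [add_self_of_Y_eq (by rw [EnegY]; ring)]
    have hx3 : x ^ 3 = x := by linear_combination -hy2
    constructor
    · rintro (hc | hc) <;> exact absurd hc.symm (some_ne_zero _)
    · rintro (rfl | rfl | rfl | rfl)
      · exact (lemA h2 _ hx3 (by linear_combination hS)).elim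
      · exact (lemA h2 _ hx3 (by linear_combination hS)).elim
      · have hq : (-(-1+S)) ^ 2 - 2 * (-(-1+S)) - 1 = 0 := by linear_combination hS
        exact (lemA h2 _ (by linear_combination -hx3) hq).elim
      · have hq : (-(-1-S)) ^ 2 - 2 * (-(-1-S)) - 1 = 0 := by linear_combination hS
        exact (lemA h2 _ (by linear_combination -hx3) hq).elim
  · have hyne : y ≠ (EcurveBar p).negY x y := by
      rw [EnegY]
      intro hc
      have h2y : 2 * y = 0 := by linear_combination hc
      rcases mul_eq_zero.mp h2y with hc' | hc'
      · exact h2 hc'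
      · exact hy0 hc'
    have h4y : 4 * y ^ 2 ≠ 0 := by
      intro hc
      rcases mul_eq_zero.mp hc with hc' | hc'
      · exact h2 (mul_self_eq_zero.mp (by linear_combination hc'))
      · exact hy0 (pow_eq_zero_iff two_ne_zero |>.mp hc')
    rw [add_self_of_Y_ne hyne, some_eq_some_iff, some_eq_some_iff]
    set L := (EcurveBar p).slope x x y y with hL
    have hLval : L * (2 * y) = 3 * x ^ 2 - 1 := by
      rw [hL, slope_of_Y_ne rfl hyne, EnegY]
      rw [div_mul_eq_mul_div, div_eq_iff (show y - -y ≠ 0 by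
        intro hc
        apply hy0
        have h2y : 2 * y = 0 := by linear_combination hc
        rcases mul_eq_zero.mp h2y with hc' | hc'
        · exact absurd hc' h2
        · exact hc')]
      simp only [EcurveBar]
      ring
    have hA : (EcurveBar p).addX x x L = L ^ 2 - 2 * x := by
      simp only [addX, EcurveBar]; ring
    have hsum : ((EcurveBar p).addY x x y L) ^ 2 =
        ((EcurveBar p).addX x x L) ^ 3 - (EcurveBar p).addX x x L :=
      (Ens p h2 _ _).mp (nonsingular_add h h (fun hc => hyne hc.2))
    have e1 : (L ^ 2 - 2 * x - 1) * (4 * y ^ 2) = (x ^ 2 - 2 * x - 1) ^ 2 := by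
      linear_combination (2 * L * y + 3 * x ^ 2 - 1) * hLval + (-8 * x - 4) * hy2
    have e2 : (L ^ 2 - 2 * x + 1) * (4 * y ^ 2) = (x ^ 2 + 2 * x - 1) ^ 2 := by
      linear_combination (2 * L * y + 3 * x ^ 2 - 1) * hLval + (-8 * x + 4) * hy2
    have c1 : (EcurveBar p).addX x x L = 1 ↔ (x = 1 + S ∨ x = 1 - S) := by
      rw [hA]
      constructor
      · intro hc
        have hq2 : (x ^ 2 - 2 * x - 1) ^ 2 = 0 := by linear_combination -e1 + (4 * y ^ 2) * hc
        have hq : x ^ 2 - 2 * x - 1 = 0 := pow_eq_zero_iff two_ne_zero |>.mp hq2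
        have : (x - 1 - S) * (x - 1 + S) = 0 := by linear_combination hq - hS
        rcases mul_eq_zero.mp this with hc' | hc'
        · left; linear_combination hc'
        · right; linear_combination hc'
      · intro hc
        have hq : x ^ 2 - 2 * x - 1 = 0 := by
          rcases hc with rfl | rfl <;> linear_combination hS
        have : (L ^ 2 - 2 * x - 1) * (4 * y ^ 2) = 0 := by
          rw [e1, hq]; ring
        rcases mul_eq_zero.mp this with hc' | hc'
        · linear_combination hc'
        · exact absurd hc' h4y
    have c2 : (EcurveBar p).addX x x L = -1 ↔ (x = -1 + S ∨ x = -1 - S) := by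
      rw [hA]
      constructor
      · intro hc
        have hq2 : (x ^ 2 + 2 * x - 1) ^ 2 = 0 := by linear_combination -e2 + (4 * y ^ 2) * hc
        have hq : x ^ 2 + 2 * x - 1 = 0 := pow_eq_zero_iff two_ne_zero |>.mp hq2
        have : (x + 1 - S) * (x + 1 + S) = 0 := by linear_combination hq - hS
        rcases mul_eq_zero.mp this with hc' | hc'
        · left; linear_combination hc'
        · right; linear_combination hc'
      · intro hc
        have hq : x ^ 2 + 2 * x - 1 = 0 := by
          rcases hc with rfl | rfl <;> linear_combination hS
        have : (L ^ 2 - 2 * x + 1) * (4 * y ^ 2) = 0 := by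
          rw [e2, hq]; ring
        rcases mul_eq_zero.mp this with hc' | hc'
        · linear_combination hc'
        · exact absurd hc' h4y
    constructor
    · rintro (⟨hx1, -⟩ | ⟨hx1, -⟩)
      · rcases c1.mp hx1 with hc | hc
        · exact Or.inl hc
        · exact Or.inr (Or.inl hc)
      · rcases c2.mp hx1 with hc | hc
        · exact Or.inr (Or.inr (Or.inl hc))
        · exact Or.inr (Or.inr (Or.inr hc))
    · intro hrhs
      have hor : (EcurveBar p).addX x x L = 1 ∨ (EcurveBar p).addX x x L = -1 := by
        rcases hrhs with hc | hc | hc | hc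
        · exact Or.inl (c1.mpr (Or.inl hc))
        · exact Or.inl (c1.mpr (Or.inr hc))
        · exact Or.inr (c2.mpr (Or.inl hc))
        · exact Or.inr (c2.mpr (Or.inr hc))
      rcases hor with hc | hc
      · left
        refine ⟨hc, ?_⟩
        rw [hc] at hsum
        have : ((EcurveBar p).addY x x y L) ^ 2 = 0 := by rw [hsum]; ring
        exact pow_eq_zero_iff two_ne_zero |>.mp this
      · right
        refine ⟨hc, ?_⟩
        rw [hc] at hsum
        have : ((EcurveBar p).addY x x y L) ^ 2 = 0 := by rw [hsum]; ring
        exact pow_eq_zero_iff two_ne_zero |>.mp this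

end Psi
open Classical in
theorem stmt8 (p : ℕ) [Fact p.Prime] (h8 : p % 8 = 1) (i s : ZMod p)
    (hi : i ^ 2 = -1) (hs : s ^ 2 = 2)
    (φ : (EcurveBar p).Point → (EcurveBar p).Point) (hφ0 : φ 0 = 0)
    (hφ : ∀ (x y : AlgebraicClosure (ZMod p)) (h : (EcurveBar p).Nonsingular x y),
      ∃ h' : (EcurveBar p).Nonsingular (-x)
        (algebraMap (ZMod p) (AlgebraicClosure (ZMod p)) i * y),
        φ (WeierstrassCurve.Affine.Point.some _ _ h) = WeierstrassCurve.Affine.Point.some _ _ h')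
    (η : (EcurveBar p).Point → (EcurveBar p).Point) (hη : ∀ P, η P = P + φ P)
    (x y : AlgebraicClosure (ZMod p)) (h : (EcurveBar p).Nonsingular x y) :
    (η^[4] (WeierstrassCurve.Affine.Point.some _ _ h) = 0 ∧
      η^[3] (WeierstrassCurve.Affine.Point.some _ _ h) ≠ 0) ↔
      (x = 1 + algebraMap (ZMod p) (AlgebraicClosure (ZMod p)) s ∨
       x = 1 - algebraMap (ZMod p) (AlgebraicClosure (ZMod p)) s ∨
       x = -1 + algebraMap (ZMod p) (AlgebraicClosure (ZMod p)) s ∨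
       x = -1 - algebraMap (ZMod p) (AlgebraicClosure (ZMod p)) s) := by
  have hp2 : (2 : ZMod p) ≠ 0 := by
    intro hc
    rw [show ((2 : ZMod p)) = ((2 : ℕ) : ZMod p) by norm_cast] at hc
    rw [ZMod.natCast_eq_zero_iff] at hc
    have := Nat.le_of_dvd (by norm_num) hc
    have h2le := (Fact.out (p := p.Prime)).two_le
    omega
  have h2K : (2 : AlgebraicClosure (ZMod p)) ≠ 0 := by
    intro hc
    apply hp2
    apply (algebraMap (ZMod p) (AlgebraicClosure (ZMod p))).injective
    rw [_root_.map_zero, map_ofNat]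
    exact hc
  have hIK : (algebraMap (ZMod p) (AlgebraicClosure (ZMod p)) i) ^ 2 = -1 := by
    rw [← map_pow, hi, map_neg, map_one]
  have hSK : (algebraMap (ZMod p) (AlgebraicClosure (ZMod p)) s) ^ 2 = 2 := by
    rw [← map_pow, hs, map_ofNat]
  set I : AlgebraicClosure (ZMod p) := algebraMap (ZMod p) (AlgebraicClosure (ZMod p)) i with hIdef
  have hφψ : ∀ P, φ P = psi h2K I hIK P := by
    intro P
    rcases P with _ | @⟨a, b, hab⟩
    · exact hφ0
    · obtain ⟨h', e⟩ := hφ a b hab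
      rw [e, psi_some]
  have hηP : ∀ Q, η Q = Q + psi h2K I hIK Q := fun Q => by rw [hη, hφψ]
  have key2 : ∀ Q, η (η Q) = psi h2K I hIK Q + psi h2K I hIK Q := by
    intro Q
    rw [hηP, hηP, psi_add, psi_psi]
    abel
  set P : (EcurveBar p).Point := WeierstrassCurve.Affine.Point.some _ _ h with hPdef
  have hpsiη : psi h2K I hIK (η P) = psi h2K I hIK P - P := by
    rw [hηP, psi_add, psi_psi]
    abel
  have i3 : η^[3] P = psi h2K I hIK (P + P) - (P + P) := by
    show η (η (η P)) = _
    rw [key2 (η P), hpsiη, psi_add]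
    abel
  have i4 : η^[4] P = -((P + P) + (P + P)) := by
    show η (η (η (η P))) = _
    rw [key2 (η (η P)), show psi h2K I hIK (η (η P)) = -P - P from by
      rw [key2 P, psi_add, psi_psi]; abel]
    abel
  rw [i3, i4, neg_eq_zero, sub_ne_zero]
  rw [show ((P + P) + (P + P) = 0 ∧ psi h2K I hIK (P + P) ≠ P + P) ↔ _ from
    tor h2K I hIK (P + P)]
  exact dbl h2K _ hSK h
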